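/- arXiv:1005.2657 — 3 statements merged into one kernel-verified Lean document; each statement's English description precedes it below -/
import Mathlib

section
/- For all natural numbers m, n with n > m and all x ∈ T, |a_n(x + 1/2 + mα mod 1) + a_n(x)| ≤ 2m. -/
open Set Filter MeasureTheory

/-- The step function `f : 𝕋 → ℤ`, `f x = 1` on `[0,1/2)` and `-1` on `[1/2,1)`,
viewed as a `1`-periodic function on `ℝ` via `Int.fract`. -/
noncomputable def stepf (x : ℝ) : ℤ := if Int.fract x < 1/2 then 1 else -1

/-- The Birkhoff sum `a_n(x) = ∑_{i=0}^{n-1} f(x + iα mod 1)`. -/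
noncomputable def birk (α : ℝ) (n : ℕ) (x : ℝ) : ℤ :=
  ∑ i ∈ Finset.range n, stepf (x + i * α)

lemma stepf_add_half (y : ℝ) : stepf (y + 1/2) = - stepf y := by
  have h0 := Int.fract_nonneg y
  have h1 := Int.fract_lt_one y
  have hfr : Int.fract (y + 1/2) = Int.fract (Int.fract y + 1/2) := by
    rw [Int.fract_eq_fract]
    exact ⟨⌊y⌋, by rw [show y + 1/2 - (Int.fract y + 1/2) = y - Int.fract y by ring, Int.self_sub_fract]⟩
  unfold stepf
  rcases lt_or_ge (Int.fract y) (1/2) with h | h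
  · have : Int.fract (Int.fract y + 1/2) = Int.fract y + 1/2 := by
      rw [Int.fract_eq_self]
      constructor <;> linarith
    rw [if_pos h, hfr, this, if_neg (by linarith)]
  · have : Int.fract (Int.fract y + 1/2) = Int.fract y - 1/2 := by
      have : Int.fract y + 1/2 = (Int.fract y - 1/2) + (1:ℤ) := by push_cast; ring
      rw [this, Int.fract_add_intCast, Int.fract_eq_self]
      constructor <;> linarith
    rw [if_neg (not_lt.2 h), hfr, this, if_pos (by linarith)]; norm_num

lemma abs_stepf_le (y : ℝ) : |stepf y| ≤ 1 := by
  unfold stepf; split <;> simp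

/-- For all naturals `m < n` and all `x ∈ 𝕋`, `|a_n(x + 1/2 + mα mod 1) + a_n(x)| ≤ 2m`. -/
theorem stmt4 (α : ℝ) (hα : Irrational α) (m n : ℕ) (hmn : m < n)
    (x : ℝ) (hx : x ∈ Set.Ico (0:ℝ) 1) :
    |birk α n (x + 1/2 + m * α) + birk α n x| ≤ 2 * (m : ℤ) := by
  set S : ℕ → ℤ := fun j => stepf (x + j * α) with hS
  have key : birk α n (x + 1/2 + m * α) = - ∑ j ∈ Finset.Ico m (m + n), S j := by
    have h1 : birk α n (x + 1/2 + m * α) = ∑ i ∈ Finset.range n, (- S (m + i)) := by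
      unfold birk
      apply Finset.sum_congr rfl
      intro i _
      rw [hS]; dsimp only
      rw [← stepf_add_half]
      congr 1
      push_cast; ring
    rw [h1, ← Finset.sum_neg_distrib, Finset.sum_Ico_eq_sum_range,
      Nat.add_sub_cancel_left]
  have hbx : birk α n x = ∑ j ∈ Finset.Ico 0 n, S j := by
    unfold birk; rw [Finset.range_eq_Ico]
  have hmn' : m ≤ n := le_of_lt hmn
  have split1 : ∑ j ∈ Finset.Ico 0 n, S j
      = ∑ j ∈ Finset.Ico 0 m, S j + ∑ j ∈ Finset.Ico m n, S j :=
    (Finset.sum_Ico_consecutive S (Nat.zero_le m) hmn').symm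
  have split2 : ∑ j ∈ Finset.Ico m (m + n), S j
      = ∑ j ∈ Finset.Ico m n, S j + ∑ j ∈ Finset.Ico n (m + n), S j :=
    (Finset.sum_Ico_consecutive S hmn' (Nat.le_add_left n m)).symm
  have habs : ∀ (a b : ℕ), |∑ j ∈ Finset.Ico a b, S j| ≤ (b - a : ℕ) := by
    intro a b
    calc |∑ j ∈ Finset.Ico a b, S j| ≤ ∑ j ∈ Finset.Ico a b, |S j| :=
          Finset.abs_sum_le_sum_abs _ _
      _ ≤ ∑ _j ∈ Finset.Ico a b, (1 : ℤ) :=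
          Finset.sum_le_sum (fun j _ => abs_stepf_le _)
      _ = (b - a : ℕ) := by simp [Nat.card_Ico]
  have e : birk α n (x + 1/2 + m * α) + birk α n x
      = ∑ j ∈ Finset.Ico 0 m, S j - ∑ j ∈ Finset.Ico n (m + n), S j := by
    rw [key, hbx, split1, split2]; ring
  rw [e]
  have h1 := habs 0 m
  have h2 := habs n (m + n)
  have hc1 : ((m - 0 : ℕ) : ℤ) = m := by simp
  have hc2 : ((m + n - n : ℕ) : ℤ) = m := by simp
  calc |∑ j ∈ Finset.Ico 0 m, S j - ∑ j ∈ Finset.Ico n (m + n), S j|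
      ≤ |∑ j ∈ Finset.Ico 0 m, S j| + |∑ j ∈ Finset.Ico n (m + n), S j| := abs_sub _ _
    _ ≤ 2 * m := by rw [hc1] at h1; rw [hc2] at h2; omega
end

section
/- (Denjoy–Koksma inequality for the step function f) If p, q are positive integers with gcd(p,q) = 1 and |α - p/q| < 1/q², then for every x ∈ T, |a_q(x)| < 4, where a_q(x) = Σ_{i=0}^{q-1} f(x + iα mod 1). -/
open Set Filter MeasureTheory

set_option maxHeartbeats 1000000

private lemma transfer_card (q : ℕ) (j : ℕ → ℕ) (hjq : ∀ i, j i < q)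
    (hinj : ∀ i1, i1 < q → ∀ i2, i2 < q → j i1 = j i2 → i1 = i2)
    (P : ℕ → Prop) [DecidablePred P] :
    ((Finset.range q).filter fun i => P (j i)).card ≤ ((Finset.range q).filter P).card := by
  apply Finset.card_le_card_of_injOn j
  · intro i hi
    simp only [Finset.mem_coe, Finset.mem_filter, Finset.mem_range] at hi ⊢
    exact ⟨hjq i, hi.2⟩
  · intro i1 h1 i2 h2 he
    simp only [Finset.coe_filter, Set.mem_setOf_eq, Finset.mem_range] at h1 h2
    exact hinj i1 h1.1 i2 h2.1 he

/-- Denjoy–Koksma inequality for the step function `f`: if `|α - p/q| < 1/q²` with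
`gcd(p,q) = 1`, then `|a_q(x)| < 4` for every `x ∈ 𝕋`. -/
theorem stmt5 (α : ℝ) (hα : Irrational α) (p q : ℕ) (hp : 0 < p) (hq : 0 < q)
    (hcop : Nat.Coprime p q) (happrox : |α - (p : ℝ) / q| < 1 / (q : ℝ) ^ 2)
    (x : ℝ) (hx : x ∈ Set.Ico (0:ℝ) 1) :
    |birk α q x| < 4 := by
  by_cases hq1 : q = 1
  · subst hq1
    simp only [birk, Finset.range_one, Finset.sum_singleton, Nat.cast_zero, zero_mul,
      add_zero, stepf]
    split <;> norm_num
  have hq2 : 2 ≤ q := by omega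
  have hqR : (0:ℝ) < q := by exact_mod_cast hq
  have hqR2 : (2:ℝ) ≤ q := by exact_mod_cast hq2
  set θ : ℝ := α - p / q with hθdef
  have hαθ : α = p / q + θ := by rw [hθdef]; ring
  have hθ0 : θ ≠ 0 := by
    intro h
    apply hα
    refine ⟨(p:ℚ)/(q:ℚ), ?_⟩
    have hα2 : α = (p:ℝ)/q := by rw [hαθ, h, add_zero]
    rw [hα2]; push_cast; ring
  have hθabs : |θ| < 1 / (q:ℝ)^2 := happrox
  set φ : ℝ := Int.fract ((q:ℝ) * x) with hφdef
  have hφ0 : 0 ≤ φ := Int.fract_nonneg _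
  have hφ1 : φ < 1 := Int.fract_lt_one _
  set b : ℕ := (⌊(q:ℝ) * x⌋).toNat with hbdef
  have hb : (b:ℝ) = (q:ℝ)*x - φ := by
    have h0 : (0:ℤ) ≤ ⌊(q:ℝ)*x⌋ := Int.floor_nonneg.mpr (mul_nonneg hqR.le hx.1)
    have h1 : ((b:ℕ):ℝ) = ((⌊(q:ℝ)*x⌋ : ℤ):ℝ) := by
      exact_mod_cast congrArg Int.cast (Int.toNat_of_nonneg h0)
    rw [h1, hφdef, Int.self_sub_fract]
  set K : ℤ := ⌈(q:ℝ)/2 - φ⌉ with hKdef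
  have hK0 : 0 ≤ K := by
    have h1 : ((-1:ℤ):ℝ) < (q:ℝ)/2 - φ := by push_cast; linarith
    have h2 : (-1:ℤ) < K := Int.lt_ceil.mpr h1
    omega
  have hKceil1 : (q:ℝ)/2 - φ ≤ (K:ℝ) := Int.le_ceil _
  have hKceil2 : (K:ℝ) < (q:ℝ)/2 - φ + 1 := Int.ceil_lt_add_one _
  have hKup : 2*K ≤ (q:ℤ) + 1 := by
    have h1 : ((2*K:ℤ):ℝ) < ((q:ℤ):ℝ) + 2 := by push_cast; linarith
    have h2 : (2*K:ℤ) < (q:ℤ) + 2 := by exact_mod_cast h1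
    omega
  have hKlow : (q:ℤ) ≤ 2*K + 1 := by
    have h1 : ((q:ℤ):ℝ) < ((2*K:ℤ):ℝ) + 2 := by push_cast; linarith
    have h2 : (q:ℤ) < 2*K + 2 := by exact_mod_cast h1
    omega
  set t : ℕ := K.toNat with htdef
  have htK : (t:ℤ) = K := Int.toNat_of_nonneg hK0
  have htq : t ≤ q := by omega
  set j : ℕ → ℕ := fun i => (i * p + b) % q with hjdef
  have hjq : ∀ i, j i < q := fun i => Nat.mod_lt _ hq
  have hjinj : ∀ i1, i1 < q → ∀ i2, i2 < q → j i1 = j i2 → i1 = i2 := by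
    intro i1 h1 i2 h2 he
    have h3 : i1 * p + b ≡ i2 * p + b [MOD q] := by
      simpa [Nat.ModEq, hjdef] using he
    have h4 : i1 ≡ i2 [MOD q] :=
      Nat.ModEq.cancel_right_of_coprime (by simpa [Nat.Coprime] using hcop.symm)
        (Nat.ModEq.add_right_cancel' b h3)
    simpa [Nat.ModEq, Nat.mod_eq_of_lt h1, Nat.mod_eq_of_lt h2] using h4
  have hdec : ∀ i : ℕ, Int.fract (x + (i:ℝ) * α) = Int.fract (((j i : ℝ) + φ)/q + (i:ℝ) * θ) := by
    intro i
    have hnat := Nat.div_add_mod (i*p + b) q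
    have hcast : (q:ℝ) * (((i*p+b)/q : ℕ):ℝ) + ((j i:ℕ):ℝ) = (i:ℝ)*(p:ℝ) + (b:ℝ) := by
      have h1 : ((q * ((i*p+b)/q) + (i*p+b) % q : ℕ) : ℝ) = ((i*p+b : ℕ):ℝ) := by
        exact_mod_cast congrArg (Nat.cast (R := ℝ)) hnat
      push_cast at h1
      simpa [hjdef] using h1
    have he : x + (i:ℝ) * α = ((((j i:ℕ) : ℝ) + φ)/q + (i:ℝ) * θ) + (((i*p+b)/q : ℕ):ℝ) := by
      rw [hαθ]
      field_simp
      nlinarith [hb, hcast]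
    rw [he, Int.fract_add_natCast]
  have hg0 : ∀ i, (0:ℝ) ≤ ((j i:ℝ) + φ)/q :=
    fun i => div_nonneg (add_nonneg (Nat.cast_nonneg _) hφ0) hqR.le
  have hg1 : ∀ i, ((j i:ℝ) + φ)/q < 1 := by
    intro i
    rw [div_lt_one hqR]
    have h1 : (j i + 1 : ℕ) ≤ q := hjq i
    have h2 : ((j i:ℕ):ℝ) + 1 ≤ (q:ℝ) := by exact_mod_cast h1
    linarith
  have hε : ∀ i, i < q → |(i:ℝ)*θ| < 1/q := by
    intro i hi
    have h1 : |(i:ℝ)*θ| = (i:ℝ) * |θ| := by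
      rw [abs_mul, abs_of_nonneg (Nat.cast_nonneg i : (0:ℝ) ≤ i)]
    have h2 : (i:ℝ) ≤ q := by exact_mod_cast hi.le
    have h3 : (i:ℝ) * |θ| ≤ q * |θ| := mul_le_mul_of_nonneg_right h2 (abs_nonneg _)
    have h4 : (q:ℝ) * |θ| < q * (1/q^2) := mul_lt_mul_of_pos_left hθabs hqR
    have h5 : (q:ℝ) * (1/q^2) = 1/q := by field_simp
    rw [h1]; linarith
  have h12 : (1:ℝ)/q ≤ 1/2 := by
    rw [div_le_div_iff₀ hqR (by norm_num : (0:ℝ) < 2)]; linarith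
  clear_value θ φ b K t j
  set N : ℕ := ((Finset.range q).filter fun i : ℕ => Int.fract (x + (i:ℝ) * α) < 1/2).card with hNdef
  have hsplitN := Finset.card_filter_add_card_filter_not
    (s := Finset.range q) (p := fun i : ℕ => Int.fract (x + (i:ℝ) * α) < 1/2)
  rw [Finset.card_range] at hsplitN
  have hbirk : birk α q x = 2 * (N:ℤ) - q := by
    unfold birk stepf
    rw [Finset.sum_ite, Finset.sum_const, Finset.sum_const, nsmul_eq_mul, nsmul_eq_mul]
    have hNc : ((Finset.range q).filter fun i : ℕ =>
        Int.fract (x + (i:ℝ) * α) < 1/2).card = N := rfl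
    omega
  have hbounds : N ≤ t + 1 ∧ t ≤ N + 1 := by
    rcases lt_or_gt_of_ne hθ0 with hneg | hpos
    · -- θ < 0 : perturbations iθ ∈ (-1/q, 0]
      constructor
      · -- N ≤ t + 1
        have hsub : ((Finset.range q).filter fun i : ℕ => Int.fract (x + (i:ℝ) * α) < 1/2) ⊆
            ((Finset.range q).filter fun i : ℕ => j i ≤ t) := by
          intro i hi
          simp only [Finset.mem_filter, Finset.mem_range] at hi ⊢
          obtain ⟨hiq, hcond⟩ := hi
          refine ⟨hiq, ?_⟩
          rw [hdec i] at hcond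
          have hε1 : (i:ℝ)*θ ≤ 0 := mul_nonpos_of_nonneg_of_nonpos (Nat.cast_nonneg _) hneg.le
          have hε2 : -(1/(q:ℝ)) < (i:ℝ)*θ := neg_lt_of_abs_lt (hε i hiq)
          by_cases hu : (0:ℝ) ≤ ((j i:ℝ) + φ)/q + i*θ
          · rw [Int.fract_eq_self.mpr ⟨hu, by linarith [hg1 i]⟩] at hcond
            have h5 : ((j i:ℝ) + φ)/q < 1/2 + 1/q := by linarith
            rw [div_lt_iff₀ hqR] at h5
            have h6 : ((j i:ℤ):ℝ) < (K:ℝ) + 1 := by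
              push_cast
              have : ((1:ℝ)/2 + 1/q) * q = q/2 + 1 := by field_simp
              nlinarith [hKceil1]
            have h7 : (j i:ℤ) < K + 1 := by exact_mod_cast h6
            omega
          · exfalso
            push_neg at hu
            set u : ℝ := ((j i:ℝ) + φ)/q + i*θ with hudef
            clear_value u
            have hfr : Int.fract u = u + 1 := by
              have h := Int.fract_add_intCast u 1
              push_cast at h
              rw [← h, Int.fract_eq_self.mpr ⟨by linarith [hg0 i], by linarith⟩]
            rw [hfr] at hcond
            have : u + 1 > 1/2 := by linarith [hg0 i]
            linarith
        have hcard : ((Finset.range q).filter fun i : ℕ => j i ≤ t).card ≤ t + 1 := by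
          calc ((Finset.range q).filter fun i : ℕ => j i ≤ t).card
              ≤ ((Finset.range q).filter fun m : ℕ => m ≤ t).card :=
                transfer_card q j hjq hjinj (fun m : ℕ => m ≤ t)
            _ ≤ (Finset.range (t+1)).card := by
                apply Finset.card_le_card
                intro m hm
                simp only [Finset.mem_filter, Finset.mem_range] at hm ⊢
                omega
            _ = t + 1 := Finset.card_range _
        exact le_trans (Finset.card_le_card hsub) hcard
      · -- t ≤ N + 1
        have hsub : ((Finset.range q).filter fun i : ℕ => ¬ Int.fract (x + (i:ℝ) * α) < 1/2) ⊆
            ((Finset.range q).filter fun i : ℕ => t ≤ j i ∨ j i = 0) := by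
          intro i hi
          simp only [Finset.mem_filter, Finset.mem_range] at hi ⊢
          obtain ⟨hiq, hcond⟩ := hi
          refine ⟨hiq, ?_⟩
          rw [hdec i] at hcond
          push_neg at hcond
          have hε1 : (i:ℝ)*θ ≤ 0 := mul_nonpos_of_nonneg_of_nonpos (Nat.cast_nonneg _) hneg.le
          have hε2 : -(1/(q:ℝ)) < (i:ℝ)*θ := neg_lt_of_abs_lt (hε i hiq)
          by_cases hu : (0:ℝ) ≤ ((j i:ℝ) + φ)/q + i*θ
          · left
            rw [Int.fract_eq_self.mpr ⟨hu, by linarith [hg1 i]⟩] at hcond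
            have h5 : (1:ℝ)/2 ≤ ((j i:ℝ) + φ)/q := by linarith
            rw [le_div_iff₀ hqR] at h5
            have h6 : (q:ℝ)/2 - φ ≤ ((j i:ℤ):ℝ) := by push_cast; nlinarith
            have h7 : K ≤ (j i:ℤ) := by rw [hKdef]; exact Int.ceil_le.mpr h6
            omega
          · right
            push_neg at hu
            have h5 : ((j i:ℝ) + φ)/q < 1/q := by linarith
            rw [div_lt_div_iff₀ hqR hqR] at h5
            have h6 : ((j i:ℤ):ℝ) < 1 := by push_cast; nlinarith
            have h7 : (j i:ℤ) < 1 := by exact_mod_cast h6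
            omega
        have hcard : ((Finset.range q).filter fun i : ℕ => t ≤ j i ∨ j i = 0).card ≤ (q - t) + 1 := by
          calc ((Finset.range q).filter fun i : ℕ => t ≤ j i ∨ j i = 0).card
              ≤ ((Finset.range q).filter fun m : ℕ => t ≤ m ∨ m = 0).card :=
                transfer_card q j hjq hjinj (fun m : ℕ => t ≤ m ∨ m = 0)
            _ ≤ (insert 0 (Finset.Ico t q)).card := by
                apply Finset.card_le_card
                intro m hm
                simp only [Finset.mem_filter, Finset.mem_range, Finset.mem_insert,
                  Finset.mem_Ico] at hm ⊢
                omega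
            _ ≤ (Finset.Ico t q).card + 1 := Finset.card_insert_le _ _
            _ = (q - t) + 1 := by rw [Nat.card_Ico]
        have h1 := le_trans (Finset.card_le_card hsub) hcard
        omega
    · -- θ > 0 : perturbations iθ ∈ [0, 1/q)
      constructor
      · -- N ≤ t + 1
        have hsub : ((Finset.range q).filter fun i : ℕ => Int.fract (x + (i:ℝ) * α) < 1/2) ⊆
            ((Finset.range q).filter fun i : ℕ => j i < t ∨ j i = q - 1) := by
          intro i hi
          simp only [Finset.mem_filter, Finset.mem_range] at hi ⊢
          obtain ⟨hiq, hcond⟩ := hi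
          refine ⟨hiq, ?_⟩
          rw [hdec i] at hcond
          have hε1 : (0:ℝ) ≤ (i:ℝ)*θ := mul_nonneg (Nat.cast_nonneg _) hpos.le
          have hε2 : (i:ℝ)*θ < 1/q := lt_of_abs_lt (hε i hiq)
          by_cases hu : ((j i:ℝ) + φ)/q + i*θ < 1
          · left
            rw [Int.fract_eq_self.mpr ⟨by linarith [hg0 i], hu⟩] at hcond
            have h5 : ((j i:ℝ) + φ)/q < 1/2 := by linarith
            rw [div_lt_iff₀ hqR] at h5
            have h6 : ((j i:ℤ):ℝ) < (q:ℝ)/2 - φ := by push_cast; nlinarith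
            have h7 : (j i:ℤ) < K := by rw [hKdef]; exact Int.lt_ceil.mpr h6
            omega
          · right
            push_neg at hu
            have h5 : (1:ℝ) - 1/q < ((j i:ℝ) + φ)/q := by linarith
            rw [lt_div_iff₀ hqR] at h5
            have h6 : ((q:ℤ):ℝ) - 2 < ((j i:ℤ):ℝ) := by
              push_cast
              have : ((1:ℝ) - 1/q) * q = q - 1 := by field_simp
              nlinarith
            have h7 : (q:ℤ) - 2 < (j i:ℤ) := by exact_mod_cast h6
            have h8 := hjq i
            omega
        have hcard : ((Finset.range q).filter fun i : ℕ => j i < t ∨ j i = q - 1).card ≤ t + 1 := by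
          calc ((Finset.range q).filter fun i : ℕ => j i < t ∨ j i = q - 1).card
              ≤ ((Finset.range q).filter fun m : ℕ => m < t ∨ m = q - 1).card :=
                transfer_card q j hjq hjinj (fun m : ℕ => m < t ∨ m = q - 1)
            _ ≤ (insert (q-1) (Finset.range t)).card := by
                apply Finset.card_le_card
                intro m hm
                simp only [Finset.mem_filter, Finset.mem_range, Finset.mem_insert] at hm ⊢
                omega
            _ ≤ (Finset.range t).card + 1 := Finset.card_insert_le _ _
            _ = t + 1 := by rw [Finset.card_range]
        exact le_trans (Finset.card_le_card hsub) hcard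
      · -- t ≤ N + 1
        have hsub : ((Finset.range q).filter fun i : ℕ => ¬ Int.fract (x + (i:ℝ) * α) < 1/2) ⊆
            ((Finset.range q).filter fun i : ℕ => t ≤ j i + 1) := by
          intro i hi
          simp only [Finset.mem_filter, Finset.mem_range] at hi ⊢
          obtain ⟨hiq, hcond⟩ := hi
          refine ⟨hiq, ?_⟩
          rw [hdec i] at hcond
          push_neg at hcond
          have hε1 : (0:ℝ) ≤ (i:ℝ)*θ := mul_nonneg (Nat.cast_nonneg _) hpos.le
          have hε2 : (i:ℝ)*θ < 1/q := lt_of_abs_lt (hε i hiq)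
          by_cases hu : ((j i:ℝ) + φ)/q + i*θ < 1
          · rw [Int.fract_eq_self.mpr ⟨by linarith [hg0 i], hu⟩] at hcond
            have h5 : (1:ℝ)/2 - 1/q < ((j i:ℝ) + φ)/q := by linarith
            rw [lt_div_iff₀ hqR] at h5
            have h6 : (K:ℝ) < ((j i:ℤ):ℝ) + 2 := by
              push_cast
              have : ((1:ℝ)/2 - 1/q) * q = q/2 - 1 := by field_simp
              nlinarith [hKceil2]
            have h7 : K < (j i:ℤ) + 2 := by exact_mod_cast h6
            omega
          · exfalso
            push_neg at hu
            set u : ℝ := ((j i:ℝ) + φ)/q + i*θ with hudef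
            clear_value u
            have hfr : Int.fract u = u - 1 := by
              have h := Int.fract_sub_intCast u 1
              push_cast at h
              rw [← h, Int.fract_eq_self.mpr ⟨by linarith, by linarith [hg1 i]⟩]
            rw [hfr] at hcond
            have : u - 1 < 1/q := by linarith [hg1 i]
            linarith
        have hcard : ((Finset.range q).filter fun i : ℕ => t ≤ j i + 1).card ≤ q - (t - 1) := by
          calc ((Finset.range q).filter fun i : ℕ => t ≤ j i + 1).card
              ≤ ((Finset.range q).filter fun m : ℕ => t ≤ m + 1).card :=
                transfer_card q j hjq hjinj (fun m : ℕ => t ≤ m + 1)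
            _ ≤ (Finset.Ico (t-1) q).card := by
                apply Finset.card_le_card
                intro m hm
                simp only [Finset.mem_filter, Finset.mem_range, Finset.mem_Ico] at hm ⊢
                omega
            _ = q - (t-1) := Nat.card_Ico _ _
        have h1 := le_trans (Finset.card_le_card hsub) hcard
        omega
  obtain ⟨hN1, hN2⟩ := hbounds
  rw [hbirk, abs_lt]
  constructor <;> omega
end

section
/- Let q = q_k, q⁺ = q_{k+1}, q⁺⁺ = q_{k+2} be consecutive convergent denominators of irrational α. If q⁺ < 3q and q⁺⁺ < 3q, then for every integer j with 0 < |j| < q, ‖2jα‖ > 1/(6q). -/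
open Set Filter MeasureTheory

noncomputable def nearInt (y : ℝ) : ℝ := |y - round y|

noncomputable def gaussIter (α : ℝ) : ℕ → ℝ
  | 0 => Int.fract α
  | n + 1 => Int.fract (gaussIter α n)⁻¹

noncomputable def cfAq (α : ℝ) (k : ℕ) : ℕ := (⌊(gaussIter α k)⁻¹⌋).toNat

noncomputable def cfQ (α : ℝ) : ℕ → ℕ
  | 0 => 1
  | 1 => cfAq α 0
  | n + 2 => cfAq α (n + 1) * cfQ α (n + 1) + cfQ α n

noncomputable def cfP (α : ℝ) : ℕ → ℤ
  | 0 => ⌊α⌋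
  | 1 => cfAq α 0 * ⌊α⌋ + 1
  | n + 2 => cfAq α (n + 1) * cfP α (n + 1) + cfP α n

lemma gauss_prop (α : ℝ) (hα : Irrational α) (k : ℕ) :
    Irrational (gaussIter α k) ∧ gaussIter α k ∈ Set.Ioo (0:ℝ) 1 := by
  induction k with
  | zero =>
    have h : Irrational (Int.fract α) := by
      rw [← Int.self_sub_floor]; exact hα.sub_intCast ⌊α⌋
    exact ⟨h, lt_of_le_of_ne (Int.fract_nonneg α) (Ne.symm h.ne_zero),
      Int.fract_lt_one α⟩
  | succ n ih =>
    have h : Irrational (Int.fract (gaussIter α n)⁻¹) := by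
      rw [← Int.self_sub_floor]; exact (ih.1.inv).sub_intCast ⌊(gaussIter α n)⁻¹⌋
    exact ⟨h, lt_of_le_of_ne (Int.fract_nonneg _) (Ne.symm h.ne_zero),
      Int.fract_lt_one _⟩

lemma gauss_pos (α : ℝ) (hα : Irrational α) (k : ℕ) : 0 < gaussIter α k :=
  (gauss_prop α hα k).2.1

lemma gauss_lt_one (α : ℝ) (hα : Irrational α) (k : ℕ) : gaussIter α k < 1 :=
  (gauss_prop α hα k).2.2

lemma cfAq_cast (α : ℝ) (hα : Irrational α) (k : ℕ) :
    ((cfAq α k : ℤ) : ℝ) = (⌊(gaussIter α k)⁻¹⌋ : ℝ) := by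
  have h1 : (1:ℝ) < (gaussIter α k)⁻¹ :=
    (one_lt_inv₀ (gauss_pos α hα k)).2 (gauss_lt_one α hα k)
  have : (0:ℤ) ≤ ⌊(gaussIter α k)⁻¹⌋ := by
    have := Int.le_floor.2 (le_of_lt (show ((1:ℤ):ℝ) < _ by exact_mod_cast h1))
    omega
  simp [cfAq, Int.toNat_of_nonneg this]

lemma cfAq_pos (α : ℝ) (hα : Irrational α) (k : ℕ) : 1 ≤ cfAq α k := by
  have h1 : (1:ℝ) < (gaussIter α k)⁻¹ :=
    (one_lt_inv₀ (gauss_pos α hα k)).2 (gauss_lt_one α hα k)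
  have : (1:ℤ) ≤ ⌊(gaussIter α k)⁻¹⌋ := Int.le_floor.2 (by exact_mod_cast h1.le)
  simp [cfAq]; omega

lemma gauss_mul (α : ℝ) (hα : Irrational α) (k : ℕ) :
    gaussIter α k * gaussIter α (k+1) = 1 - (cfAq α k : ℝ) * gaussIter α k := by
  have hne : gaussIter α k ≠ 0 := (gauss_pos α hα k).ne'
  have h : gaussIter α (k+1) = (gaussIter α k)⁻¹ - (⌊(gaussIter α k)⁻¹⌋ : ℝ) := by
    rw [show gaussIter α (k+1) = Int.fract (gaussIter α k)⁻¹ from rfl, ← Int.self_sub_floor]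
  have hc : (cfAq α k : ℝ) = (⌊(gaussIter α k)⁻¹⌋ : ℝ) := by
    exact_mod_cast cfAq_cast α hα k
  rw [h, hc]
  field_simp

lemma cfQ_pos (α : ℝ) (hα : Irrational α) : ∀ k, 1 ≤ cfQ α k := by
  intro k
  induction k using Nat.strong_induction_on with
  | _ k ih =>
    match k with
    | 0 => simp [cfQ]
    | 1 => simpa [cfQ] using cfAq_pos α hα 0
    | (n+2) =>
      have h5 := ih n (by omega)
      show 1 ≤ cfAq α (n+1) * cfQ α (n+1) + cfQ α n
      omega

lemma cfQ_mono (α : ℝ) (hα : Irrational α) (k : ℕ) : cfQ α k ≤ cfQ α (k+1) := by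
  match k with
  | 0 => simpa [cfQ] using cfAq_pos α hα 0
  | (n+1) =>
    show cfQ α (n+1) ≤ cfAq α (n+1) * cfQ α (n+1) + cfQ α n
    have h5 := cfAq_pos α hα (n+1)
    nlinarith

lemma e_eq (α : ℝ) (hα : Irrational α) : ∀ k, (cfQ α k : ℝ) * α - (cfP α k : ℝ)
    = (-1)^k * ∏ i ∈ Finset.range (k+1), gaussIter α i := by
  intro k
  induction k using Nat.strong_induction_on with
  | _ k ih =>
    match k with
    | 0 =>
      show (cfQ α 0 : ℝ) * α - (cfP α 0 : ℝ) = (-1)^0 * ∏ i ∈ Finset.range 1, gaussIter α i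
      rw [Finset.prod_range_one, show gaussIter α 0 = Int.fract α from rfl, ← Int.self_sub_floor]
      simp [cfQ, cfP]
    | 1 =>
      have hm := gauss_mul α hα 0
      have h0 : gaussIter α 0 = α - (⌊α⌋:ℝ) := by
        rw [show gaussIter α 0 = Int.fract α from rfl, ← Int.self_sub_floor]
      show (cfQ α 1 : ℝ) * α - (cfP α 1 : ℝ) = (-1)^1 * ∏ i ∈ Finset.range 2, gaussIter α i
      rw [Finset.prod_range_succ, Finset.prod_range_one]
      simp only [cfQ, cfP]
      push_cast
      rw [h0] at hm ⊢
      linear_combination hm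
    | (n+2) =>
      have h1 := ih n (by omega)
      have h2 := ih (n+1) (by omega)
      have hm := gauss_mul α hα (n+1)
      have hrec : (cfQ α (n+2) : ℝ) * α - (cfP α (n+2) : ℝ)
          = (cfAq α (n+1) : ℝ) * ((cfQ α (n+1) : ℝ) * α - (cfP α (n+1) : ℝ))
            + ((cfQ α n : ℝ) * α - (cfP α n : ℝ)) := by
        simp only [cfQ, cfP]; push_cast; ring
      have hp2 : (∏ i ∈ Finset.range (n+2+1), gaussIter α i)
          = (∏ i ∈ Finset.range (n+1+1), gaussIter α i) * gaussIter α (n+2) :=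
        Finset.prod_range_succ _ _
      have hp1 : (∏ i ∈ Finset.range (n+1+1), gaussIter α i)
          = (∏ i ∈ Finset.range (n+1), gaussIter α i) * gaussIter α (n+1) :=
        Finset.prod_range_succ _ _
      rw [hrec, h1, h2, hp2, hp1]
      linear_combination (-(-1:ℝ)^n * ∏ i ∈ Finset.range (n+1), gaussIter α i) * hm

lemma det (α : ℝ) : ∀ n, cfP α (n+1) * (cfQ α n : ℤ) - cfP α n * (cfQ α (n+1) : ℤ) = (-1)^n := by
  intro n
  induction n with
  | zero => simp [cfP, cfQ]; ring
  | succ n ih =>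
    show cfP α (n+2) * (cfQ α (n+1) : ℤ) - cfP α (n+1) * (cfQ α (n+2) : ℤ) = (-1)^(n+1)
    simp only [cfP, cfQ]
    push_cast
    linear_combination (-1 : ℤ) * ih

lemma abs_e (α : ℝ) (hα : Irrational α) (k : ℕ) :
    |(cfQ α k : ℝ) * α - (cfP α k : ℝ)| = ∏ i ∈ Finset.range (k+1), gaussIter α i := by
  rw [e_eq α hα k, abs_mul, abs_pow, abs_neg, abs_one, one_pow, one_mul,
    abs_of_pos (Finset.prod_pos (fun i _ => gauss_pos α hα i))]

lemma abs_e_lt (α : ℝ) (hα : Irrational α) (k : ℕ) :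
    |(cfQ α (k+1) : ℝ) * α - (cfP α (k+1) : ℝ)| < |(cfQ α k : ℝ) * α - (cfP α k : ℝ)| := by
  rw [abs_e α hα, abs_e α hα, Finset.prod_range_succ]
  have hP : 0 < ∏ i ∈ Finset.range (k+1), gaussIter α i :=
    Finset.prod_pos (fun i _ => gauss_pos α hα i)
  nlinarith [gauss_lt_one α hα (k+1), gauss_pos α hα (k+1)]

lemma abs_e_pos (α : ℝ) (hα : Irrational α) (k : ℕ) :
    0 < |(cfQ α k : ℝ) * α - (cfP α k : ℝ)| := by
  rw [abs_e α hα]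
  exact Finset.prod_pos (fun i _ => gauss_pos α hα i)

lemma abs_helper (x y : ℝ) (h : 0 ≤ x * y) : |x| ≤ |x + y| := by
  rcases abs_cases x with ⟨h1, h2⟩ | ⟨h1, h2⟩ <;>
    rcases abs_cases (x + y) with ⟨h3, h4⟩ | ⟨h3, h4⟩ <;> nlinarith

lemma e_lower (α : ℝ) (hα : Irrational α) (k : ℕ) :
    1 < ((cfQ α (k+1) : ℝ) + (cfQ α (k+2) : ℝ)) * |(cfQ α (k+1) : ℝ) * α - (cfP α (k+1) : ℝ)| := by
  set e1 := (cfQ α (k+1) : ℝ) * α - (cfP α (k+1) : ℝ) with he1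
  set e2 := (cfQ α (k+2) : ℝ) * α - (cfP α (k+2) : ℝ) with he2
  have hD : cfP α (k+2) * (cfQ α (k+1) : ℤ) - cfP α (k+1) * (cfQ α (k+2) : ℤ) = (-1)^(k+1) :=
    det α (k+1)
  have hDr : ((cfP α (k+2) : ℝ) * (cfQ α (k+1) : ℝ) - (cfP α (k+1) : ℝ) * (cfQ α (k+2) : ℝ))
      = (-1:ℝ)^(k+1) := by exact_mod_cast congrArg (Int.cast : ℤ → ℝ) hD
  have hid : (cfQ α (k+2) : ℝ) * e1 - (cfQ α (k+1) : ℝ) * e2 = (-1:ℝ)^(k+1) := by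
    rw [he1, he2]; linear_combination hDr
  have h1 : (1:ℝ) = |(cfQ α (k+2) : ℝ) * e1 - (cfQ α (k+1) : ℝ) * e2| := by
    rw [hid, abs_pow, abs_neg, abs_one, one_pow]
  have h2 : |(cfQ α (k+2) : ℝ) * e1 - (cfQ α (k+1) : ℝ) * e2|
      ≤ (cfQ α (k+2) : ℝ) * |e1| + (cfQ α (k+1) : ℝ) * |e2| := by
    calc _ ≤ |(cfQ α (k+2) : ℝ) * e1| + |(cfQ α (k+1) : ℝ) * e2| := abs_sub _ _
    _ = (cfQ α (k+2) : ℝ) * |e1| + (cfQ α (k+1) : ℝ) * |e2| := by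
        rw [abs_mul, abs_mul, abs_of_nonneg (by positivity : (0:ℝ) ≤ (cfQ α (k+2) : ℝ)),
          abs_of_nonneg (by positivity : (0:ℝ) ≤ (cfQ α (k+1) : ℝ))]
  have h3 : |e2| < |e1| := abs_e_lt α hα (k+1)
  have hq1 : (1:ℝ) ≤ (cfQ α (k+1) : ℝ) := by exact_mod_cast cfQ_pos α hα (k+1)
  nlinarith

lemma best_approx (α : ℝ) (hα : Irrational α) (k : ℕ) (m p : ℤ) (hm0 : m ≠ 0)
    (hm : |m| < (cfQ α (k+2) : ℤ)) :
    |(cfQ α (k+1) : ℝ) * α - (cfP α (k+1) : ℝ)| ≤ |(m:ℝ) * α - (p:ℝ)| := by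
  rw [show ((cfQ α (k+1) : ℕ) : ℝ) = (((cfQ α (k+1) : ℕ) : ℤ) : ℝ) by push_cast; ring]
  set q1 : ℤ := (cfQ α (k+1) : ℤ) with hq1d
  set q2 : ℤ := (cfQ α (k+2) : ℤ) with hq2d
  set p1 : ℤ := cfP α (k+1) with hp1d
  set p2 : ℤ := cfP α (k+2) with hp2d
  have hD : p2 * q1 - p1 * q2 = (-1)^(k+1) := det α (k+1)
  set s : ℤ := (-1)^(k+1) with hsd
  have hs : s * s = 1 := by rw [hsd, ← pow_add]; exact Even.neg_one_pow ⟨k+1, by ring⟩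
  set A : ℤ := s * (m * p2 - p * q2) with hAd
  set B : ℤ := s * (q1 * p - p1 * m) with hBd
  have hma : A * q1 + B * q2 = m := by
    rw [hAd, hBd]; linear_combination (s * m) * hD + m * hs
  have hpa : A * p1 + B * p2 = p := by
    rw [hAd, hBd]; linear_combination (s * p) * hD + p * hs
  set e1 := (q1 : ℝ) * α - (p1 : ℝ) with he1
  set e2 := (q2 : ℝ) * α - (p2 : ℝ) with he2
  have hma' : (A:ℝ) * q1 + (B:ℝ) * q2 = (m:ℝ) := by exact_mod_cast congrArg (Int.cast : ℤ → ℝ) hma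
  have hpa' : (A:ℝ) * p1 + (B:ℝ) * p2 = (p:ℝ) := by exact_mod_cast congrArg (Int.cast : ℤ → ℝ) hpa
  have hsum : (m:ℝ) * α - (p:ℝ) = (A:ℝ) * e1 + (B:ℝ) * e2 := by
    rw [he1, he2]; linear_combination α * hma'.symm - hpa'.symm
  have hq1_pos : (1:ℤ) ≤ q1 := by rw [hq1d]; exact_mod_cast cfQ_pos α hα (k+1)
  have hq2_pos : (1:ℤ) ≤ q2 := by rw [hq2d]; exact_mod_cast cfQ_pos α hα (k+2)
  -- e1 * e2 < 0
  have hP1 : 0 < ∏ i ∈ Finset.range (k+2), gaussIter α i :=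
    Finset.prod_pos (fun i _ => gauss_pos α hα i)
  have hP2 : 0 < ∏ i ∈ Finset.range (k+3), gaussIter α i :=
    Finset.prod_pos (fun i _ => gauss_pos α hα i)
  have he1v : e1 = (-1)^(k+1) * ∏ i ∈ Finset.range (k+2), gaussIter α i := e_eq α hα (k+1)
  have he2v : e2 = (-1)^(k+2) * ∏ i ∈ Finset.range (k+3), gaussIter α i := e_eq α hα (k+2)
  have hsign : ((-1:ℝ)^(k+1)) * ((-1:ℝ)^(k+2)) = -1 := by
    rw [← pow_add]; exact Odd.neg_one_pow ⟨k+1, by ring⟩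
  have he12 : e1 * e2 < 0 := by
    rw [he1v, he2v]
    have : (-1:ℝ)^(k+1) * (∏ i ∈ Finset.range (k+2), gaussIter α i) *
        ((-1:ℝ)^(k+2) * ∏ i ∈ Finset.range (k+3), gaussIter α i)
        = -((∏ i ∈ Finset.range (k+2), gaussIter α i) *
          ∏ i ∈ Finset.range (k+3), gaussIter α i) := by
      linear_combination ((∏ i ∈ Finset.range (k+2), gaussIter α i) *
        ∏ i ∈ Finset.range (k+3), gaussIter α i) * hsign
    rw [this]
    nlinarith
  rw [hsum]
  clear_value q1 q2 p1 p2 s A B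
  clear hq1d hq2d hp1d hp2d hsd hAd hBd hD hs hpa hma' hpa' hsum he1v he2v hP1 hP2 hsign
  by_cases hB : B = 0
  · have hA : A ≠ 0 := by
      intro h
      rw [h, hB] at hma; simp at hma; omega
    have hA1 : (1:ℝ) ≤ |(A:ℝ)| := by
      rw [← Int.cast_abs]; exact_mod_cast Int.one_le_abs hA
    have hz : (A:ℝ) * e1 + (B:ℝ) * e2 = (A:ℝ) * e1 := by rw [hB]; push_cast; ring
    rw [hz, abs_mul]
    nlinarith [abs_nonneg e1]
  · have hA : A ≠ 0 := by
      intro h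
      rw [h] at hma; simp at hma
      have : |m| = |B| * q2 := by rw [← hma, abs_mul, abs_of_nonneg (by omega : (0:ℤ) ≤ q2)]
      have hB1 : 1 ≤ |B| := Int.one_le_abs hB
      nlinarith
    -- A * B < 0
    have hAB : A * B < 0 := by
      rcases lt_trichotomy A 0 with hA' | hA' | hA'
      · rcases lt_trichotomy B 0 with hB' | hB' | hB'
        · exfalso
          have : m ≤ -q2 := by nlinarith
          have : -q2 < m := by
            have := abs_lt.1 hm; omega
          omega
        · exact absurd hB' hB
        · nlinarith
      · exact absurd hA' hA
      · rcases lt_trichotomy B 0 with hB' | hB' | hB'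
        · nlinarith
        · exact absurd hB' hB
        · exfalso
          have : q2 ≤ m := by nlinarith
          have := abs_lt.1 hm; omega
    have hAB' : 0 ≤ ((A:ℝ) * e1) * ((B:ℝ) * e2) := by
      have h1 : ((A:ℝ) * e1) * ((B:ℝ) * e2) = ((A:ℝ) * (B:ℝ)) * (e1 * e2) := by ring
      have h2 : (A:ℝ) * (B:ℝ) < 0 := by exact_mod_cast hAB
      nlinarith
    have hA1 : (1:ℝ) ≤ |(A:ℝ)| := by
      rw [← Int.cast_abs]; exact_mod_cast Int.one_le_abs hA
    calc |e1| ≤ |(A:ℝ)| * |e1| := by nlinarith [abs_nonneg e1]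
    _ = |(A:ℝ) * e1| := (abs_mul _ _).symm
    _ ≤ |(A:ℝ) * e1 + (B:ℝ) * e2| := abs_helper _ _ hAB'

/-- If `q = q_k`, `q⁺ = q_{k+1}`, `q⁺⁺ = q_{k+2}` are consecutive convergent denominators of
irrational `α` with `q⁺ < 3q` and `q⁺⁺ < 3q`, then for every integer `j` with `0 < |j| < q`,
`‖2jα‖ > 1/(6q)`. -/
theorem stmt10 (α : ℝ) (hα : Irrational α) (k : ℕ) (q qp qpp : ℕ)
    (hq : q = cfQ α k) (hqp : qp = cfQ α (k + 1)) (hqpp : qpp = cfQ α (k + 2))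
    (h1 : qp < 3 * q) (h2 : qpp < 3 * q)
    (j : ℤ) (hj0 : 0 < |j|) (hj : |j| < (q : ℤ)) :
    nearInt (2 * (j : ℝ) * α) > 1 / (6 * (q : ℝ)) := by
  have hqpos : 1 ≤ q := by omega
  have hq2ge : 2 * q ≤ qpp := by
    have h3 : cfQ α k ≤ cfQ α (k+1) := cfQ_mono α hα k
    have h4 : cfQ α (k+1) + cfQ α k ≤ cfQ α (k+2) := by
      show cfQ α (k+1) + cfQ α k ≤ cfAq α (k+1) * cfQ α (k+1) + cfQ α k
      nlinarith [cfAq_pos α hα (k+1)]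
    omega
  have hjne : j ≠ 0 := by intro h; simp [h] at hj0
  have hm0 : (2 * j : ℤ) ≠ 0 := mul_ne_zero two_ne_zero hjne
  have hmlt : |2 * j| < (cfQ α (k+2) : ℤ) := by
    have habs2 : |2 * j| = 2 * |j| := by rw [abs_mul]; norm_num
    have hcast : (2:ℤ) * (q:ℤ) ≤ (cfQ α (k+2) : ℤ) := by
      rw [← hqpp]; exact_mod_cast hq2ge
    omega
  have hba := best_approx α hα k (2*j) (round (2 * (j:ℝ) * α)) hm0 hmlt
  have hlow := e_lower α hα k
  set e1 := (cfQ α (k+1) : ℝ) * α - (cfP α (k+1) : ℝ) with he1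
  have hni : nearInt (2 * (j:ℝ) * α) = |2 * (j:ℝ) * α - (round (2 * (j:ℝ) * α) : ℤ)| := by
    simp [nearInt]
  have hba' : |e1| ≤ nearInt (2 * (j:ℝ) * α) := by
    rw [hni]
    convert hba using 2
    push_cast; ring
  have hq1r : (cfQ α (k+1) : ℝ) ≤ (3:ℝ) * q := by
    rw [← hqp]; exact_mod_cast h1.le
  have hq2r : (cfQ α (k+2) : ℝ) < (3:ℝ) * q := by
    rw [← hqpp]; exact_mod_cast h2
  have hq1pos : (0:ℝ) < (cfQ α (k+1) : ℝ) := by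
    exact_mod_cast cfQ_pos α hα (k+1)
  have hqr : (0:ℝ) < (q:ℝ) := by exact_mod_cast hqpos
  have hsum_lt : (cfQ α (k+1) : ℝ) + (cfQ α (k+2) : ℝ) < 6 * q := by nlinarith
  have habs_pos : 0 < |e1| := abs_e_pos α hα (k+1)
  have key : 1 / (6 * (q:ℝ)) < |e1| := by
    have h6 : (0:ℝ) < 6 * q := by positivity
    rw [div_lt_iff₀ h6]
    nlinarith
  linarith
end
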